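/- arXiv:math/0302193 — 2 statements merged into one kernel-verified Lean document; each statement's English description precedes it below -/
import Mathlib

section
/- Let Ω ⊆ ℝ^d be a bounded symmetric open set containing 0, let z ∈ Ω, and let f : ℝ^d → ℝ be a continuous integrable positive definite function with supp f ⊆ Ω and f(0) = 1. Set H = {k ≥ 2 : kz ∈ Ω and -kz ∈ Ω}. Then the trigonometric polynomial ψ(t) = 1 + 2f(z)cos(2πt) + ∑_{k∈H} 2f(kz)cos(2πkt) is nonnegative for all t ∈ ℝ. -/
open MeasureTheory Real


open MeasureTheory Real Complex Filter Module Finset Bornology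
open scoped FourierTransform RealInnerProductSpace Topology ComplexConjugate

variable {V : Type*} [NormedAddCommGroup V] [InnerProductSpace ℝ V]
  [MeasurableSpace V] [BorelSpace V] [FiniteDimensional ℝ V]

/-- Multiplication formula specialised: `∫ 𝓕f ξ · e^{-c⁻¹‖ξ‖²} = ∫ f x · (πc)^{d/2} e^{-π²c‖x‖²}`. -/
lemma gauss_mul_identity {f : V → ℂ} (hf : Integrable f) {c : ℝ} (hc : 0 < c) :
    ∫ ξ : V, (𝓕 f ξ) * Complex.exp (-(c⁻¹ : ℂ) * ‖ξ‖ ^ 2)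
      = ∫ x : V, f x * ((π * c : ℂ) ^ (finrank ℝ V / 2 : ℂ)
          * Complex.exp (-π ^ 2 * c * ‖x‖ ^ 2)) := by
  have hb : (0 : ℝ) < ((c⁻¹ : ℂ)).re := by simpa using inv_pos.2 hc
  have J : Integrable (fun ξ : V ↦ Complex.exp (-(c⁻¹ : ℂ) * ‖ξ‖ ^ 2)) := by
    simpa using GaussianFourier.integrable_cexp_neg_mul_sq_norm_add hb 0 (0 : V)
  have hL : Continuous fun p : V × V => (innerₗ V) p.1 p.2 := continuous_inner
  have key := VectorFourier.integral_fourierIntegral_smul_eq_flip (L := innerₗ V)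
    Real.continuous_fourierChar hL hf J
  have flip_eq : ∀ x : V,
      VectorFourier.fourierIntegral 𝐞 volume (innerₗ V).flip
        (fun ξ : V ↦ Complex.exp (-(c⁻¹ : ℂ) * ‖ξ‖ ^ 2)) x
      = (π * c : ℂ) ^ (finrank ℝ V / 2 : ℂ) * Complex.exp (-π ^ 2 * c * ‖x‖ ^ 2) := by
    intro x
    have h1 : VectorFourier.fourierIntegral 𝐞 volume (innerₗ V).flip
        (fun ξ : V ↦ Complex.exp (-(c⁻¹ : ℂ) * ‖ξ‖ ^ 2)) x
        = 𝓕 (fun ξ : V ↦ Complex.exp (-(c⁻¹ : ℂ) * ‖ξ‖ ^ 2)) x := by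
      rw [Real.fourier_eq]; unfold VectorFourier.fourierIntegral
      congr 1
      ext ξ
      congr 2
      simp [real_inner_comm]
    rw [h1, fourier_gaussian_innerProductSpace hb]
    have hcc : (c⁻¹ : ℂ) ≠ 0 := by
      simp only [ne_eq, inv_eq_zero, ofReal_eq_zero]; exact hc.ne'
    congr 1
    · congr 1
      field_simp
    · congr 1
      field_simp
  calc ∫ ξ : V, (𝓕 f ξ) * Complex.exp (-(c⁻¹ : ℂ) * ‖ξ‖ ^ 2)
      = ∫ ξ : V, (𝓕 f ξ) • Complex.exp (-(c⁻¹ : ℂ) * ‖ξ‖ ^ 2) := by simp [smul_eq_mul]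
    _ = ∫ x : V, f x • VectorFourier.fourierIntegral 𝐞 volume (innerₗ V).flip
          (fun ξ : V ↦ Complex.exp (-(c⁻¹ : ℂ) * ‖ξ‖ ^ 2)) x := key
    _ = _ := by
        apply integral_congr_ae
        filter_upwards with x
        rw [flip_eq x, smul_eq_mul]

lemma integrable_rexp_gauss {b : ℝ} (hb : 0 < b) :
    Integrable (fun ξ : V => rexp (-b * ‖ξ‖ ^ 2)) := by
  have h := (GaussianFourier.integrable_cexp_neg_mul_sq_norm_add
    (b := (b : ℂ)) (by simpa) 0 (0 : V)).norm
  simpa [Complex.norm_exp, ← Complex.ofReal_pow] using h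

lemma fourier_integrable_of_nonneg {f : V → ℂ} (hcont : Continuous f) (hf : Integrable f)
    (hpd : ∀ ξ : V, 0 ≤ (𝓕 f ξ).re ∧ (𝓕 f ξ).im = 0) (h0 : f 0 = 1) :
    Integrable (𝓕 f) := by
  set g := 𝓕 f with hg
  have gcont : Continuous g :=
    VectorFourier.fourierIntegral_continuous Real.continuous_fourierChar continuous_inner hf
  have gre : ∀ ξ : V, g ξ = ((g ξ).re : ℂ) := by
    intro ξ; apply Complex.ext <;> simp [(hpd ξ).2]
  have gnorm : ∀ ξ : V, ‖g ξ‖ = (g ξ).re := by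
    intro ξ
    conv_lhs => rw [gre ξ]
    rw [Complex.norm_real, Real.norm_eq_abs, _root_.abs_of_nonneg (hpd ξ).1]
  have gbdd : ∃ C, ∀ ξ : V, ‖g ξ‖ ≤ C :=
    ⟨∫ x, ‖f x‖, fun ξ => VectorFourier.norm_fourierIntegral_le_integral_norm _ _ _ _ _⟩
  set φ : ℕ → V → ℝ := fun n ξ => rexp (-((n : ℝ) + 1)⁻¹ * ‖ξ‖ ^ 2) * (g ξ).re with hφ
  have hφ_nonneg : ∀ n ξ, 0 ≤ φ n ξ := fun n ξ =>
    mul_nonneg (Real.exp_pos _).le (hpd ξ).1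
  have hφ_cont : ∀ n, Continuous (φ n) := by
    intro n
    exact ((Real.continuous_exp.comp (by fun_prop)).mul
      (Complex.continuous_re.comp gcont))
  have hφ_int : ∀ n, Integrable (φ n) := by
    intro n
    have hgauss : Integrable (fun ξ : V => rexp (-((n : ℝ) + 1)⁻¹ * ‖ξ‖ ^ 2)) :=
      integrable_rexp_gauss (by positivity)
    obtain ⟨C, hC⟩ := gbdd
    have : Integrable (fun ξ : V => (g ξ).re * rexp (-((n : ℝ) + 1)⁻¹ * ‖ξ‖ ^ 2)) := by
      apply hgauss.bdd_mul (Complex.continuous_re.comp gcont).aestronglyMeasurable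
      exact Filter.Eventually.of_forall fun ξ => (Complex.abs_re_le_norm _).trans (hC ξ)
    exact this.congr (Filter.Eventually.of_forall fun ξ => mul_comm _ _)
  have hφ_mono : ∀ ξ : V, Monotone (fun n => φ n ξ) := by
    intro ξ n m hnm
    apply mul_le_mul_of_nonneg_right _ (hpd ξ).1
    apply Real.exp_le_exp.2
    have hinv : ((m : ℝ) + 1)⁻¹ ≤ ((n : ℝ) + 1)⁻¹ := by
      apply inv_anti₀ (by positivity)
      have : (n : ℝ) ≤ (m : ℝ) := Nat.cast_le.2 hnm
      linarith
    have hs : (0 : ℝ) ≤ ‖ξ‖ ^ 2 := by positivity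
    nlinarith [mul_le_mul_of_nonneg_right hinv hs]
  have hφ_tendsto : ∀ ξ : V, Tendsto (fun n => φ n ξ) atTop (𝓝 ((g ξ).re)) := by
    intro ξ
    have h1 : Tendsto (fun n : ℕ => ((n : ℝ) + 1)⁻¹) atTop (𝓝 0) := by
      apply Tendsto.inv_tendsto_atTop
      exact tendsto_atTop_add_const_right _ 1 tendsto_natCast_atTop_atTop
    have h2 : Tendsto (fun n : ℕ => rexp (-((n : ℝ) + 1)⁻¹ * ‖ξ‖ ^ 2)) atTop (𝓝 1) := by
      have := ((h1.neg.mul_const (‖ξ‖ ^ 2)).rexp)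
      simpa using this
    have h3 := h2.mul_const ((g ξ).re)
    rw [one_mul] at h3
    exact h3
  -- the value of each integral
  have hval : ∀ c : ℝ, 0 < c → ∫ ξ : V, rexp (-c⁻¹ * ‖ξ‖ ^ 2) * (g ξ).re
      = (∫ x : V, ((π * c : ℂ) ^ (finrank ℝ V / 2 : ℂ)
          * Complex.exp (-π ^ 2 * c * ‖x‖ ^ 2)) • f x).re := by
    intro c hc
    have heq1 : (∫ x : V, ((π * c : ℂ) ^ (finrank ℝ V / 2 : ℂ)
          * Complex.exp (-π ^ 2 * c * ‖x‖ ^ 2)) • f x)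
        = ∫ ξ : V, g ξ * Complex.exp (-(c⁻¹ : ℂ) * ‖ξ‖ ^ 2) := by
      rw [gauss_mul_identity hf hc]
      apply integral_congr_ae
      filter_upwards with x
      rw [smul_eq_mul]
      ring
    have hb : (0 : ℝ) < ((c⁻¹ : ℂ) : ℂ).re := by simpa using inv_pos.2 hc
    have hint : Integrable (fun ξ : V => g ξ * Complex.exp (-(c⁻¹ : ℂ) * ‖ξ‖ ^ 2)) := by
      have J : Integrable (fun ξ : V ↦ Complex.exp (-(c⁻¹ : ℂ) * ‖ξ‖ ^ 2)) := by
        simpa using GaussianFourier.integrable_cexp_neg_mul_sq_norm_add hb 0 (0 : V)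
      obtain ⟨C, hC⟩ := gbdd
      exact J.bdd_mul gcont.aestronglyMeasurable (Filter.Eventually.of_forall hC)
    rw [heq1, ← RCLike.re_eq_complex_re, ← integral_re hint]
    apply integral_congr_ae
    filter_upwards with ξ
    have hexp : Complex.exp (-(c⁻¹ : ℂ) * ‖ξ‖ ^ 2)
        = ((rexp (-c⁻¹ * ‖ξ‖ ^ 2) : ℝ) : ℂ) := by
      rw [Complex.ofReal_exp]
      congr 1
      push_cast
      ring
    rw [RCLike.re_eq_complex_re, hexp, Complex.mul_re, Complex.ofReal_re, Complex.ofReal_im]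
    simp only [mul_zero, sub_zero]
    ring
  -- the limit of the integrals is 1
  have hlim : Tendsto (fun n : ℕ => ∫ ξ, φ n ξ) atTop (𝓝 1) := by
    have base := Real.tendsto_integral_gaussian_smul' (f := f) hf (v := 0) hcont.continuousAt
    have hshift : Tendsto (fun n : ℕ => (n : ℝ) + 1) atTop atTop :=
      tendsto_atTop_add_const_right _ 1 tendsto_natCast_atTop_atTop
    simp only [zero_sub, norm_neg] at base
    have comp := (Complex.continuous_re.tendsto _).comp (base.comp hshift)
    rw [h0] at comp
    simp only [Complex.one_re] at comp
    apply comp.congr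
    intro n
    simp only [Function.comp_apply]
    rw [← hval ((n : ℝ) + 1) (by positivity)]
  have hle : ∀ n, ∫ ξ, φ n ξ ≤ 1 := by
    have hmono : Monotone (fun n => ∫ ξ, φ n ξ) := by
      intro n m hnm
      exact integral_mono (hφ_int n) (hφ_int m) (fun ξ => hφ_mono ξ hnm)
    exact fun n => hmono.ge_of_tendsto hlim n
  -- conclude finiteness
  refine ⟨gcont.aestronglyMeasurable, ?_⟩
  rw [hasFiniteIntegral_iff_norm]
  have hnormeq : ∀ ξ : V, ENNReal.ofReal ‖g ξ‖ = ENNReal.ofReal ((g ξ).re) := by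
    intro ξ; rw [gnorm]
  calc ∫⁻ ξ, ENNReal.ofReal ‖g ξ‖
      = ∫⁻ ξ, ENNReal.ofReal ((g ξ).re) := by
        apply lintegral_congr_ae; filter_upwards with ξ; rw [hnormeq]
    _ = ∫⁻ ξ, Filter.liminf (fun n => ENNReal.ofReal (φ n ξ)) atTop := by
        apply lintegral_congr_ae; filter_upwards with ξ
        rw [(ENNReal.tendsto_ofReal (hφ_tendsto ξ)).liminf_eq]
    _ ≤ Filter.liminf (fun n => ∫⁻ ξ, ENNReal.ofReal (φ n ξ)) atTop := by
        apply lintegral_liminf_le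
        intro n
        exact ((hφ_cont n).measurable).ennreal_ofReal
    _ ≤ ENNReal.ofReal 1 := by
        apply Filter.liminf_le_of_frequently_le'
        apply Filter.Frequently.of_forall
        intro n
        rw [← MeasureTheory.ofReal_integral_eq_lintegral_ofReal (hφ_int n)
          (Filter.Eventually.of_forall (hφ_nonneg n))]
        exact ENNReal.ofReal_le_ofReal (hle n)
    _ < ⊤ := ENNReal.ofReal_lt_top

lemma even_of_fourier_real {f : V → ℝ} (hcont : Continuous fun x : V => (f x : ℂ))
    (hf : Integrable fun x : V => (f x : ℂ))
    (hg_int : Integrable (𝓕 (fun x : V => (f x : ℂ))))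
    (him : ∀ ξ : V, (𝓕 (fun x : V => (f x : ℂ)) ξ).im = 0) (v : V) : f (-v) = f v := by
  set F : V → ℂ := fun x => (f x : ℂ) with hF
  set g := 𝓕 F with hgdef
  have hInv : ∀ w : V, F w = ∫ ξ, 𝐞 ⟪ξ, w⟫ • g ξ := by
    intro w
    conv_lhs => rw [← Continuous.fourierInv_fourier_eq hcont hf hg_int]
    rw [Real.fourierInv_eq]
  have h1 : F (-v) = ∫ ξ, 𝐞 (-⟪ξ, v⟫) • g ξ := by
    rw [hInv (-v)]
    apply integral_congr_ae; filter_upwards with ξ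
    rw [inner_neg_right]
  have h2 : (starRingEnd ℂ) (F v) = ∫ ξ, 𝐞 (-⟪ξ, v⟫) • g ξ := by
    rw [hInv v, ← integral_conj]
    apply integral_congr_ae; filter_upwards with ξ
    rw [Circle.smul_def, Circle.smul_def, smul_eq_mul, smul_eq_mul, map_mul]
    congr 1
    · rw [Real.fourierChar_apply, Real.fourierChar_apply, ← Complex.exp_conj]
      congr 1
      simp [Complex.ext_iff]
    · exact Complex.conj_eq_iff_im.2 (him ξ)
  have h3 : F (-v) = F v := by rw [h1, ← h2, hF, Complex.conj_ofReal]
  simp only [hF] at h3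
  exact_mod_cast h3

lemma quadform_nonneg {f : V → ℝ} {g : V → ℂ}
    (hg_int : Integrable g) (hg_cont : Continuous g)
    (hInv : ∀ v : V, ((f v : ℝ) : ℂ) = ∫ ξ, 𝐞 ⟪ξ, v⟫ • g ξ)
    (hre : ∀ ξ : V, 0 ≤ (g ξ).re) (z : V) (t : ℝ) (N : ℕ) :
    0 ≤ ∑ j ∈ Finset.range N, ∑ l ∈ Finset.range N,
      Real.cos (2 * π * (((j : ℝ) - l) * t)) * f (((j : ℝ) - (l : ℝ)) • z) := by
  have conj_char : ∀ r : ℝ, (starRingEnd ℂ) ((𝐞 r : ℂ)) = ((𝐞 (-r) : ℂ)) := by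
    intro r
    rw [Real.fourierChar_apply, Real.fourierChar_apply, ← Complex.exp_conj]
    congr 1
    simp [Complex.ext_iff]
  have mul_char : ∀ r s : ℝ, (𝐞 r : ℂ) * (𝐞 s : ℂ) = (𝐞 (r + s) : ℂ) := by
    intro r s
    rw [Real.fourierChar_apply, Real.fourierChar_apply, Real.fourierChar_apply,
      ← Complex.exp_add]
    congr 1
    push_cast
    ring
  have norm_char : ∀ r : ℝ, ‖(𝐞 r : ℂ)‖ = 1 := fun r => by
    rw [Real.fourierChar_apply]
    simpa using Complex.norm_exp_ofReal_mul_I (2 * π * r)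
  set A : ℕ → V → ℂ := fun j ξ => (𝐞 ((j : ℝ) * t + ⟪ξ, (j : ℝ) • z⟫) : ℂ) with hA
  have hA_cont : ∀ j, Continuous (A j) := by
    intro j
    apply Continuous.subtype_val
    apply Real.continuous_fourierChar.comp
    exact continuous_const.add (continuous_id.inner continuous_const)
  have hA_norm : ∀ j ξ, ‖A j ξ‖ = 1 := fun j ξ => norm_char _
  -- the key pointwise identity for each pair (j, l)
  have key : ∀ j l : ℕ, (𝐞 ((((j : ℝ) - l) * t)) : ℂ) * ((f (((j : ℝ) - (l : ℝ)) • z) : ℝ) : ℂ)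
      = ∫ ξ, A j ξ * (starRingEnd ℂ) (A l ξ) * g ξ := by
    intro j l
    rw [hInv, ← MeasureTheory.integral_const_mul]
    apply integral_congr_ae; filter_upwards with ξ
    rw [Circle.smul_def, smul_eq_mul, ← mul_assoc, hA]
    simp only
    rw [conj_char, mul_char, mul_char]
    congr 2
    rw [real_inner_smul_right, real_inner_smul_right, real_inner_smul_right]
    ring
    rfl
  set D : V → ℂ := fun ξ => ∑ j ∈ Finset.range N, A j ξ with hD
  have hD_cont : Continuous D := continuous_finset_sum _ (fun j _ => hA_cont j)
  have hD_norm : ∀ ξ, ‖D ξ‖ ≤ N := by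
    intro ξ
    calc ‖D ξ‖ ≤ ∑ j ∈ Finset.range N, ‖A j ξ‖ := norm_sum_le _ _
    _ = N := by simp [hA_norm]
  have hint_pair : ∀ j l : ℕ, Integrable (fun ξ => A j ξ * (starRingEnd ℂ) (A l ξ) * g ξ) := by
    intro j l
    apply hg_int.bdd_mul (c := 1) (((hA_cont j).mul (Complex.continuous_conj.comp (hA_cont l))).aestronglyMeasurable)
    refine Filter.Eventually.of_forall fun ξ => ?_
    simp only [Pi.mul_apply, Function.comp_apply, norm_mul, RCLike.norm_conj, hA_norm, mul_one]
    exact le_refl 1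
  have hint_D : Integrable (fun ξ => D ξ * (starRingEnd ℂ) (D ξ) * g ξ) := by
    apply hg_int.bdd_mul (c := (N : ℝ) ^ 2) ((hD_cont.mul (Complex.continuous_conj.comp hD_cont)).aestronglyMeasurable)
    refine Filter.Eventually.of_forall fun ξ => ?_
    simp only [Pi.mul_apply, Function.comp_apply, norm_mul, RCLike.norm_conj]
    calc ‖D ξ‖ * ‖D ξ‖ ≤ (N : ℝ) * N := by
          apply mul_le_mul (hD_norm ξ) (hD_norm ξ) (norm_nonneg _) (Nat.cast_nonneg N)
    _ = (N : ℝ) ^ 2 := by ring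
  have sum_eq : (∑ j ∈ Finset.range N, ∑ l ∈ Finset.range N,
        (𝐞 ((((j : ℝ) - l) * t)) : ℂ) * ((f (((j : ℝ) - (l : ℝ)) • z) : ℝ) : ℂ))
      = ∫ ξ, D ξ * (starRingEnd ℂ) (D ξ) * g ξ := by
    have expand : ∀ ξ : V, D ξ * (starRingEnd ℂ) (D ξ) * g ξ
        = ∑ j ∈ Finset.range N, ∑ l ∈ Finset.range N,
            A j ξ * (starRingEnd ℂ) (A l ξ) * g ξ := by
      intro ξ
      simp only [hD, map_sum]
      rw [Finset.sum_mul_sum, Finset.sum_mul]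
      refine Finset.sum_congr rfl fun j _ => ?_
      rw [Finset.sum_mul]
    rw [integral_congr_ae (Filter.Eventually.of_forall expand)]
    rw [integral_finset_sum _ (fun j _ => integrable_finset_sum _ (fun l _ => hint_pair j l))]
    refine Finset.sum_congr rfl (fun j _ => ?_)
    rw [integral_finset_sum _ (fun l _ => hint_pair j l)]
    exact Finset.sum_congr rfl (fun l _ => key j l)
  -- take real parts
  have re_eq : ∑ j ∈ Finset.range N, ∑ l ∈ Finset.range N,
      Real.cos (2 * π * (((j : ℝ) - l) * t)) * f (((j : ℝ) - (l : ℝ)) • z)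
      = (∫ ξ, D ξ * (starRingEnd ℂ) (D ξ) * g ξ).re := by
    rw [← sum_eq, Complex.re_sum]
    refine Finset.sum_congr rfl (fun j _ => ?_)
    rw [Complex.re_sum]
    refine Finset.sum_congr rfl (fun l _ => ?_)
    rw [Complex.mul_re, Complex.ofReal_re, Complex.ofReal_im, mul_zero, sub_zero,
      Real.fourierChar_apply, Complex.exp_ofReal_mul_I_re]
  rw [re_eq, ← RCLike.re_eq_complex_re, ← integral_re hint_D, RCLike.re_eq_complex_re]
  apply integral_nonneg
  intro ξ
  have : D ξ * (starRingEnd ℂ) (D ξ) = ((Complex.normSq (D ξ) : ℝ) : ℂ) := Complex.mul_conj _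
  simp only [this]
  rw [Complex.mul_re, Complex.ofReal_re, Complex.ofReal_im, zero_mul, sub_zero]
  exact mul_nonneg (Complex.normSq_nonneg _) (hre ξ)


lemma double_sum_range (g : ℤ → ℝ) (N : ℕ) :
    ∑ j ∈ range N, ∑ l ∈ range N, g ((j : ℤ) - l)
      = N * g 0 + ∑ i ∈ range N, ((N - 1 - i : ℕ) : ℝ) * (g (i + 1) + g (-(i + 1))) := by
  induction N with
  | zero => simp
  | succ N ih =>
    have h1 : ∑ l ∈ range N, g ((N : ℤ) - l) = ∑ i ∈ range N, g (i + 1) := by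
      rw [← Finset.sum_range_reflect (fun l => g ((N : ℤ) - l)) N]
      apply Finset.sum_congr rfl
      intro i hi
      simp only [mem_range] at hi
      congr 1
      push_cast [Nat.cast_sub (by omega : i ≤ N - 1), Nat.cast_sub (by omega : 1 ≤ N)]
      ring
    have h2 : ∑ j ∈ range N, g ((j : ℤ) - N) = ∑ i ∈ range N, g (-(i + 1)) := by
      rw [← Finset.sum_range_reflect (fun j => g ((j : ℤ) - N)) N]
      apply Finset.sum_congr rfl
      intro i hi
      simp only [mem_range] at hi
      congr 1
      push_cast [Nat.cast_sub (by omega : i ≤ N - 1), Nat.cast_sub (by omega : 1 ≤ N)]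
      ring
    rw [Finset.sum_range_succ]
    have expand : ∀ j ∈ range N, ∑ l ∈ range (N + 1), g ((j : ℤ) - l)
        = (∑ l ∈ range N, g ((j : ℤ) - l)) + g ((j : ℤ) - N) := by
      intro j _; rw [Finset.sum_range_succ]
    rw [Finset.sum_congr rfl expand, Finset.sum_add_distrib, ih, Finset.sum_range_succ, h1, h2]
    have h3 : ∑ i ∈ range (N + 1), ((N + 1 - 1 - i : ℕ) : ℝ) * (g (i + 1) + g (-(i + 1)))
        = ∑ i ∈ range N, (((N - 1 - i : ℕ) : ℝ) + 1) * (g (i + 1) + g (-(i + 1))) := by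
      rw [Finset.sum_range_succ]
      have : ((N + 1 - 1 - N : ℕ) : ℝ) = 0 := by norm_num
      rw [this, zero_mul, add_zero]
      apply Finset.sum_congr rfl
      intro i hi
      simp only [mem_range] at hi
      congr 1
      have : (N + 1 - 1 - i : ℕ) = (N - 1 - i) + 1 := by omega
      rw [this]; push_cast; ring
    rw [h3]
    simp only [Nat.cast_succ, add_mul, one_mul, Finset.sum_add_distrib]
    have : ((N : ℤ)) - N = 0 := by ring
    rw [this]
    ring

/-- Let `Ω ⊆ ℝ^d` be a bounded, symmetric, open set containing `0`, let `z ∈ Ω`,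
and let `f : ℝ^d → ℝ` be continuous, integrable and positive definite with
`supp f ⊆ Ω` and `f 0 = 1`. If `S` is the (finite) set
`H = {k ≥ 2 : kz ∈ Ω and -kz ∈ Ω}`, then the trigonometric polynomial
`ψ(t) = 1 + 2 f(z) cos(2πt) + ∑_{k ∈ H} 2 f(kz) cos(2πkt)` is nonnegative. -/
theorem posdef_restriction_nonneg
    (d : ℕ) (Ω : Set (EuclideanSpace ℝ (Fin d)))
    (hΩ_open : IsOpen Ω) (hΩ_bdd : Bornology.IsBounded Ω)
    (hΩ_symm : ∀ x ∈ Ω, -x ∈ Ω) (hΩ_zero : 0 ∈ Ω)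
    (z : EuclideanSpace ℝ (Fin d)) (hz : z ∈ Ω)
    (f : EuclideanSpace ℝ (Fin d) → ℝ)
    (hf_cont : Continuous f)
    (hf_int : Integrable (fun x => (f x : ℂ)))
    (hf_pd : ∀ ξ : EuclideanSpace ℝ (Fin d),
      0 ≤ (FourierTransform.fourier (fun x => (f x : ℂ)) ξ).re ∧
        (FourierTransform.fourier (fun x => (f x : ℂ)) ξ).im = 0)
    (hf_supp : tsupport f ⊆ Ω)
    (hf0 : f 0 = 1)
    (S : Finset ℕ)
    (hS : ↑S = {k : ℕ | 2 ≤ k ∧ (k : ℝ) • z ∈ Ω ∧ -((k : ℝ) • z) ∈ Ω}) :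
    ∀ t : ℝ, 0 ≤ 1 + 2 * f z * Real.cos (2 * π * t) +
      ∑ k ∈ S, 2 * f ((k : ℝ) • z) * Real.cos (2 * π * k * t) := by
  intro t
  set F : EuclideanSpace ℝ (Fin d) → ℂ := fun x => (f x : ℂ) with hF
  have hFcont : Continuous F := Complex.continuous_ofReal.comp hf_cont
  have hre : ∀ ξ : EuclideanSpace ℝ (Fin d), 0 ≤ (𝓕 F ξ).re := fun ξ => (hf_pd ξ).1
  have him : ∀ ξ : EuclideanSpace ℝ (Fin d), (𝓕 F ξ).im = 0 := fun ξ => (hf_pd ξ).2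
  have hF0 : F 0 = 1 := by rw [hF]; simp [hf0]
  have hg_int : Integrable (𝓕 F) :=
    fourier_integrable_of_nonneg hFcont hf_int hf_pd hF0
  have hg_cont : Continuous (𝓕 F) :=
    VectorFourier.fourierIntegral_continuous Real.continuous_fourierChar continuous_inner hf_int
  have hInv : ∀ v : EuclideanSpace ℝ (Fin d), ((f v : ℝ) : ℂ) = ∫ ξ, 𝐞 ⟪ξ, v⟫ • 𝓕 F ξ := by
    intro v
    conv_lhs => rw [show ((f v : ℝ) : ℂ) = F v from rfl,
      ← Continuous.fourierInv_fourier_eq hFcont hf_int hg_int]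
    rw [Real.fourierInv_eq]
  have heven : ∀ v : EuclideanSpace ℝ (Fin d), f (-v) = f v := fun v =>
    even_of_fourier_real hFcont hf_int hg_int him v
  have hS_mem : ∀ k : ℕ, k ∈ S ↔ (2 ≤ k ∧ (k : ℝ) • z ∈ Ω ∧ -((k : ℝ) • z) ∈ Ω) := by
    intro k
    rw [← Finset.mem_coe, hS]
    rfl
  have hvanish : ∀ m : ℕ, 2 ≤ m → m ∉ S → f ((m : ℝ) • z) = 0 := by
    intro m hm hmS
    have hnot : (m : ℝ) • z ∉ Ω := by
      intro hin
      exact hmS ((hS_mem m).2 ⟨hm, hin, hΩ_symm _ hin⟩)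
    exact image_eq_zero_of_notMem_tsupport (fun hmem => hnot (hf_supp hmem))
  have hquad : ∀ N : ℕ, 0 ≤ ∑ j ∈ Finset.range N, ∑ l ∈ Finset.range N,
      Real.cos (2 * π * (((j : ℝ) - l) * t)) * f (((j : ℝ) - (l : ℝ)) • z) :=
    quadform_nonneg hg_int hg_cont hInv hre z t
  set G : ℤ → ℝ := fun m => Real.cos (2 * π * ((m : ℝ) * t)) * f ((m : ℝ) • z) with hG
  have hG0 : G 0 = 1 := by simp [hG, hf0]
  set h : ℕ → ℝ := fun k => 2 * f ((k : ℝ) • z) * Real.cos (2 * π * k * t) with hh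
  have hGh : ∀ k : ℕ, G (k : ℤ) + G (-(k : ℤ)) = h k := by
    intro k
    simp only [hG, hh]
    push_cast
    rw [neg_smul, heven ((k : ℝ) • z),
      show 2 * π * (-(k : ℝ) * t) = -(2 * π * ((k : ℝ) * t)) by ring, Real.cos_neg]
    ring
  have hh0 : ∀ k : ℕ, 2 ≤ k → k ∉ S → h k = 0 := by
    intro k h2 hkS
    simp [hh, hvanish k h2 hkS]
  have hsum : ∀ N : ℕ, ∑ j ∈ Finset.range N, ∑ l ∈ Finset.range N,
      Real.cos (2 * π * (((j : ℝ) - l) * t)) * f (((j : ℝ) - (l : ℝ)) • z)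
      = N * G 0 + ∑ i ∈ Finset.range N, ((N - 1 - i : ℕ) : ℝ) * (G (i + 1) + G (-(i + 1))) := by
    intro N
    rw [← double_sum_range G N]
    refine Finset.sum_congr rfl fun j _ => Finset.sum_congr rfl fun l _ => ?_
    simp only [hG]
    push_cast
    ring
  -- truncate the single sum
  set N₀ : ℕ := S.sup id + 2 with hN₀
  have hS2 : ∀ k ∈ S, 2 ≤ k := fun k hk => ((hS_mem k).1 hk).1
  have htrunc : ∀ N : ℕ, N₀ ≤ N →
      ∑ i ∈ Finset.range N, ((N - 1 - i : ℕ) : ℝ) * (G (i + 1) + G (-(i + 1)))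
        = ((N - 1 : ℕ) : ℝ) * h 1 + ∑ k ∈ S, ((N - k : ℕ) : ℝ) * h k := by
    intro N hN
    have hterm : ∀ i : ℕ, G ((i : ℤ) + 1) + G (-((i : ℤ) + 1)) = h (i + 1) := by
      intro i
      have e1 : ((i : ℤ) + 1) = ((i + 1 : ℕ) : ℤ) := by push_cast; ring
      rw [e1]
      exact hGh (i + 1)
    set T : Finset ℕ := insert 0 (S.image (· - 1)) with hT
    have hsub : T ⊆ Finset.range N := by
      intro x hx
      rw [hT, Finset.mem_insert] at hx
      rcases hx with rfl | hx
      · simp only [Finset.mem_range]; omega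
      · obtain ⟨k, hk, rfl⟩ := Finset.mem_image.1 hx
        have := Finset.le_sup (f := id) hk
        simp only [id] at this
        simp only [Finset.mem_range]
        omega
    have hzero : ∀ i ∈ Finset.range N, i ∉ T →
        ((N - 1 - i : ℕ) : ℝ) * (G (i + 1) + G (-(i + 1))) = 0 := by
      intro i _ hiT
      rw [hT, Finset.mem_insert] at hiT
      push_neg at hiT
      obtain ⟨hi0, hiim⟩ := hiT
      have h2 : 2 ≤ i + 1 := by omega
      have hnS : i + 1 ∉ S := by
        intro hmem
        exact hiim (Finset.mem_image.2 ⟨i + 1, hmem, by omega⟩)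
      rw [hterm i, hh0 (i + 1) h2 hnS, mul_zero]
    rw [← Finset.sum_subset hsub hzero]
    have h0T : (0 : ℕ) ∉ S.image (· - 1) := by
      intro hmem
      obtain ⟨k, hk, hk0⟩ := Finset.mem_image.1 hmem
      have := hS2 k hk
      omega
    rw [hT, Finset.sum_insert h0T]
    congr 1
    · rw [hterm 0]
      norm_num
    · rw [Finset.sum_image (by intro a ha b hb hab; have := hS2 a ha; have := hS2 b hb; simp only at hab; omega)]
      refine Finset.sum_congr rfl fun k hk => ?_
      have h2k := hS2 k hk
      rw [hterm (k - 1)]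
      have e1 : k - 1 + 1 = k := by omega
      have e2 : N - 1 - (k - 1) = N - k := by omega
      rw [e1, e2]
  -- the normalized sequence and its limit
  set a : ℕ → ℝ := fun N => 1 + ((N : ℝ)⁻¹ * ((N - 1 : ℕ) : ℝ)) * h 1
      + ∑ k ∈ S, ((N : ℝ)⁻¹ * ((N - k : ℕ) : ℝ)) * h k with ha
  have hcoef : ∀ k : ℕ, Tendsto (fun N : ℕ => (N : ℝ)⁻¹ * ((N - k : ℕ) : ℝ)) atTop (𝓝 1) := by
    intro k
    have hev : ∀ᶠ N : ℕ in atTop, 1 - (k : ℝ) * (N : ℝ)⁻¹ = (N : ℝ)⁻¹ * ((N - k : ℕ) : ℝ) := by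
      filter_upwards [eventually_ge_atTop (k + 1)] with N hN
      have hNk : k ≤ N := by omega
      have hN0 : (N : ℝ) ≠ 0 := Nat.cast_ne_zero.2 (by omega)
      rw [Nat.cast_sub hNk]
      field_simp
    have h0 : Tendsto (fun N : ℕ => (N : ℝ)⁻¹) atTop (𝓝 0) :=
      tendsto_inv_atTop_zero.comp tendsto_natCast_atTop_atTop
    have h1 : Tendsto (fun N : ℕ => 1 - (k : ℝ) * (N : ℝ)⁻¹) atTop (𝓝 1) := by
      have := (h0.const_mul (k : ℝ)).const_sub 1
      simpa using this
    exact h1.congr' hev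
  have ha_tendsto : Tendsto a atTop (𝓝 (1 + h 1 + ∑ k ∈ S, h k)) := by
    rw [ha]
    apply Tendsto.add
    · apply Tendsto.add tendsto_const_nhds
      simpa using (hcoef 1).mul_const (h 1)
    · apply tendsto_finset_sum
      intro k _
      simpa using (hcoef k).mul_const (h k)
  have ha_nonneg : ∀ᶠ N : ℕ in atTop, 0 ≤ a N := by
    filter_upwards [eventually_ge_atTop N₀] with N hN
    have hN1 : 1 ≤ N := by omega
    have hNR : (0 : ℝ) < N := by exact_mod_cast Nat.lt_of_lt_of_le (by omega) hN
    have hNne : ((N : ℝ)) ≠ 0 := hNR.ne'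
    have hq := hquad N
    rw [hsum N, htrunc N hN, hG0] at hq
    have hval : a N = (N : ℝ)⁻¹ * ((N : ℝ) * 1 + (((N - 1 : ℕ) : ℝ) * h 1
        + ∑ k ∈ S, ((N - k : ℕ) : ℝ) * h k)) := by
      simp only [ha]
      rw [mul_add, mul_add, Finset.mul_sum, mul_one, inv_mul_cancel₀ hNne]
      simp only [mul_assoc]
      ring
    rw [hval]
    exact mul_nonneg (by positivity) hq
  have hlim : 0 ≤ 1 + h 1 + ∑ k ∈ S, h k := ge_of_tendsto ha_tendsto ha_nonneg
  have hfin : h 1 = 2 * f z * Real.cos (2 * π * t) := by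
    simp [hh]
  rw [← hfin]
  exact hlim
end

section
/- Suppose the open set Ω ⊆ ℝ^d contains kz for every integer k (for a fixed z ∈ ℝ^d). Then sup{f(z) : f continuous positive definite on ℝ^d, supp f ⊆ Ω, f(0) = 1} = 1. -/
open MeasureTheory Real Complex Filter Module Metric Bornology Function
open scoped Topology FourierTransform RealInnerProductSpace ComplexConjugate ENNReal

variable {V : Type*} [NormedAddCommGroup V] [InnerProductSpace ℝ V]
  [MeasurableSpace V] [BorelSpace V] [FiniteDimensional ℝ V]

lemma partA {f : V → ℝ} (hf : Continuous f)
    (hi : Integrable (fun x => (f x : ℂ)))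
    (hpos : ∀ ξ, 0 ≤ (𝓕 (fun x => (f x : ℂ)) ξ).re ∧ (𝓕 (fun x => (f x : ℂ)) ξ).im = 0)
    (z : V) : f z ≤ f 0 := by
  set F : V → ℂ := fun x => (f x : ℂ) with hF
  set g : V → ℂ := 𝓕 F with hg
  have hcont_g : Continuous g :=
    VectorFourier.fourierIntegral_continuous Real.continuous_fourierChar continuous_inner hi
  set r : V → ℝ := fun ξ => (g ξ).re with hr
  have hr_cont : Continuous r := Complex.continuous_re.comp hcont_g
  have hr_nonneg : ∀ ξ, 0 ≤ r ξ := fun ξ => (hpos ξ).1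
  have hg_eq : ∀ ξ, g ξ = ((r ξ : ℝ) : ℂ) := by
    intro ξ
    apply Complex.ext
    · simp [r]
    · simp [(hpos ξ).2]
  -- the complex gaussian is integrable
  have hJ : ∀ c : ℝ, 0 < c → Integrable (fun ξ : V => cexp (-(c : ℂ)⁻¹ * ‖ξ‖ ^ 2)) := by
    intro c hc
    have := GaussianFourier.integrable_cexp_neg_mul_sq_norm_add
      (V := V) (b := (c : ℂ)⁻¹) (by simpa using hc) 0 0
    simpa using this
  -- multiplication formula
  have mult : ∀ c : ℝ, 0 < c →
      ∫ ξ, cexp (-(c : ℂ)⁻¹ * ‖ξ‖ ^ 2) • g ξ =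
      ∫ x, (𝓕 (fun ξ : V => cexp (-(c : ℂ)⁻¹ * ‖ξ‖ ^ 2)) x) • F x := by
    intro c hc
    have h := (VectorFourier.integral_fourierIntegral_smul_eq_flip (L := innerₗ V)
      Real.continuous_fourierChar continuous_inner (hJ c hc) hi).symm
    rw [flip_innerₗ] at h
    exact h
  have mult2 : ∀ c : ℝ, 0 < c →
      ∫ ξ, cexp (-(c : ℂ)⁻¹ * ‖ξ‖ ^ 2) • g ξ =
      ∫ x, ((π * c : ℂ) ^ (finrank ℝ V / 2 : ℂ) * cexp (-π ^ 2 * c * ‖(0 : V) - x‖ ^ 2)) • F x := by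
    intro c hc
    rw [mult c hc]
    congr 1 with x
    rw [fourier_gaussian_innerProductSpace (by simpa using hc)]
    congr 2
    · rw [div_eq_mul_inv, inv_inv]

    · simp only [norm_neg, zero_sub, norm_neg]
      field_simp
  have tend0 : Tendsto (fun c : ℝ =>
      ∫ x, ((π * c : ℂ) ^ (finrank ℝ V / 2 : ℂ) * cexp (-π ^ 2 * c * ‖(0 : V) - x‖ ^ 2)) • F x)
      atTop (𝓝 (F 0)) :=
    Real.tendsto_integral_gaussian_smul' hi ((Complex.continuous_ofReal.comp hf).continuousAt)
  have tendC : Tendsto (fun c : ℝ => ∫ ξ, cexp (-(c : ℂ)⁻¹ * ‖ξ‖ ^ 2) • g ξ)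
      atTop (𝓝 (F 0)) := by
    apply tend0.congr'
    filter_upwards [Ioi_mem_atTop 0] with c (hc : 0 < c)
    exact (mult2 c hc).symm
  have hgbdd : ∃ C, ∀ ξ, ‖g ξ‖ ≤ C :=
    ⟨∫ x, ‖F x‖, fun ξ => VectorFourier.norm_fourierIntegral_le_integral_norm _ _ _ _ _⟩
  have hint : ∀ c : ℝ, 0 < c → Integrable (fun ξ => cexp (-(c : ℂ)⁻¹ * ‖ξ‖ ^ 2) • g ξ) := by
    intro c hc
    have h2 : Integrable (fun ξ : V => g ξ * cexp (-(c : ℂ)⁻¹ * ‖ξ‖ ^ 2)) :=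
      hgbdd.elim fun C hC => (hJ c hc).bdd_mul hcont_g.aestronglyMeasurable (Eventually.of_forall hC)
    simpa [smul_eq_mul, mul_comm] using h2
  have hre_eq : ∀ (c : ℝ) (ξ : V),
      (cexp (-(c : ℂ)⁻¹ * ‖ξ‖ ^ 2) • g ξ).re = rexp (-c⁻¹ * ‖ξ‖ ^ 2) * r ξ := by
    intro c ξ
    have h1 : (-(c : ℂ)⁻¹ * (‖ξ‖ : ℂ) ^ 2) = ((-c⁻¹ * ‖ξ‖ ^ 2 : ℝ) : ℂ) := by push_cast; ring
    rw [hg_eq ξ, h1, ← Complex.ofReal_exp, smul_eq_mul, ← Complex.ofReal_mul, Complex.ofReal_re]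
  have hint_re : ∀ c : ℝ, 0 < c → Integrable (fun ξ => rexp (-c⁻¹ * ‖ξ‖ ^ 2) * r ξ) := by
    intro c hc
    exact ((hint c hc).re).congr (Eventually.of_forall fun ξ => by
      simpa using hre_eq c ξ)
  have tendR : Tendsto (fun c : ℝ => ∫ ξ, rexp (-c⁻¹ * ‖ξ‖ ^ 2) * r ξ) atTop (𝓝 (f 0)) := by
    have h2 : Tendsto (fun c : ℝ => (∫ ξ, cexp (-(c : ℂ)⁻¹ * ‖ξ‖ ^ 2) • g ξ).re)
        atTop (𝓝 (F 0).re) := (Complex.continuous_re.tendsto _).comp tendC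
    have h3 : (F 0).re = f 0 := by simp [F]
    rw [h3] at h2
    apply h2.congr'
    filter_upwards [Ioi_mem_atTop 0] with c (hc : 0 < c)
    have hri := integral_re (hint c hc)
    simp only [RCLike.re_to_complex] at hri
    rw [← hri]
    exact integral_congr_ae (Eventually.of_forall fun ξ => by simpa using (hre_eq c ξ))
  -- monotone convergence to get integrability of g
  set φ : ℕ → V → ℝ≥0∞ :=
    fun n ξ => ENNReal.ofReal (rexp (-((n : ℝ) + 1)⁻¹ * ‖ξ‖ ^ 2) * r ξ) with hφ
  have mono_pt : ∀ ξ : V, Monotone fun n : ℕ => rexp (-((n : ℝ) + 1)⁻¹ * ‖ξ‖ ^ 2) * r ξ := by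
    intro ξ m n hmn
    apply mul_le_mul_of_nonneg_right _ (hr_nonneg ξ)
    apply Real.exp_le_exp.2
    have h1 : ((n : ℝ) + 1)⁻¹ ≤ ((m : ℝ) + 1)⁻¹ := by
      apply inv_anti₀ (by positivity)
      have : (m : ℝ) ≤ (n : ℝ) := Nat.cast_le.2 hmn
      linarith
    nlinarith [sq_nonneg (‖ξ‖)]
  have hφmono : Monotone φ := by
    intro m n hmn ξ
    exact ENNReal.ofReal_le_ofReal (mono_pt ξ hmn)
  have tendsto_pt : ∀ ξ : V,
      Tendsto (fun n : ℕ => rexp (-((n : ℝ) + 1)⁻¹ * ‖ξ‖ ^ 2) * r ξ) atTop (𝓝 (r ξ)) := by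
    intro ξ
    have h0 : Tendsto (fun n : ℕ => -((n : ℝ) + 1)⁻¹ * ‖ξ‖ ^ 2) atTop (𝓝 0) := by
      have := ((tendsto_inv_atTop_zero.comp
        (tendsto_atTop_add_const_right atTop (1 : ℝ) tendsto_natCast_atTop_atTop)).neg).mul_const
        (‖ξ‖ ^ 2)
      simpa using this
    have := ((Real.continuous_exp.tendsto 0).comp h0).mul_const (r ξ)
    simpa using this
  have hsup_pt : ∀ ξ : V, (⨆ n, φ n ξ) = ENNReal.ofReal (r ξ) := by
    intro ξ
    have h1 : Tendsto (fun n => φ n ξ) atTop (𝓝 (⨆ n, φ n ξ)) :=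
      tendsto_atTop_iSup (fun m n hmn => hφmono hmn ξ)
    have h2 : Tendsto (fun n => φ n ξ) atTop (𝓝 (ENNReal.ofReal (r ξ))) :=
      (ENNReal.continuous_ofReal.tendsto _).comp (tendsto_pt ξ)
    exact tendsto_nhds_unique h1 h2
  have hφmeas : ∀ n, Measurable (φ n) := by
    intro n
    exact ENNReal.measurable_ofReal.comp
      (((continuous_const.mul ((continuous_norm).pow 2)).rexp.mul hr_cont)).measurable
  have ha_eq : ∀ n : ℕ, ∫⁻ ξ, φ n ξ =
      ENNReal.ofReal (∫ ξ, rexp (-((n : ℝ) + 1)⁻¹ * ‖ξ‖ ^ 2) * r ξ) := by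
    intro n
    rw [ofReal_integral_eq_lintegral_ofReal (hint_re _ (by positivity))
      (Eventually.of_forall fun ξ => mul_nonneg (Real.exp_nonneg _) (hr_nonneg ξ))]
  have amono : Monotone fun n => ∫⁻ ξ, φ n ξ := fun m n hmn => lintegral_mono (hφmono hmn)
  have atend : Tendsto (fun n => ∫⁻ ξ, φ n ξ) atTop (𝓝 (ENNReal.ofReal (f 0))) := by
    have hnat : Tendsto (fun n : ℕ => ((n : ℝ) + 1)) atTop atTop :=
      tendsto_atTop_add_const_right atTop (1 : ℝ) tendsto_natCast_atTop_atTop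
    have h2 := (tendR.comp hnat)
    have h3 := (ENNReal.continuous_ofReal.tendsto _).comp h2
    apply h3.congr
    intro n
    exact (ha_eq n).symm
  have hbound : ∀ n, ∫⁻ ξ, φ n ξ ≤ ENNReal.ofReal (f 0) := fun n =>
    amono.ge_of_tendsto atend n
  have hfin : ∫⁻ ξ, ENNReal.ofReal (r ξ) < ⊤ := by
    have h1 : ∫⁻ ξ, ENNReal.ofReal (r ξ) = ⨆ n, ∫⁻ ξ, φ n ξ := by
      rw [← lintegral_iSup hφmeas hφmono]
      congr 1 with ξ
      exact (hsup_pt ξ).symm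
    rw [h1]
    exact lt_of_le_of_lt (iSup_le hbound) ENNReal.ofReal_lt_top
  have key : Integrable g := by
    refine ⟨hcont_g.aestronglyMeasurable, ?_⟩
    have hnorm : ∀ ξ, ‖g ξ‖ₑ = ENNReal.ofReal (r ξ) := by
      intro ξ
      rw [← ofReal_norm, hg_eq ξ]
      simp [Complex.norm_real, _root_.abs_of_nonneg (hr_nonneg ξ)]
    simpa only [HasFiniteIntegral, hnorm] using hfin
  -- Fourier inversion
  have hinv : ∀ v, 𝓕⁻ g v = F v := fun v =>
    MeasureTheory.Integrable.fourierInv_fourier_eq hi key ((Complex.continuous_ofReal.comp hf).continuousAt)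
  have hint_r : Integrable r := key.re
  have hint_z : ∀ w : V, Integrable (fun ξ => 𝐞 ⟪ξ, w⟫ • g ξ) := by
    intro w
    have := (VectorFourier.fourierIntegral_convergent_iff (E := ℂ) (L := innerₗ V)
      Real.continuous_fourierChar continuous_inner (-w)).2 key
    simpa using this
  have hpt : ∀ (w : V) (ξ : V), (𝐞 ⟪ξ, w⟫ • g ξ).re ≤ r ξ := by
    intro w ξ
    have h1 : (𝐞 ⟪ξ, w⟫ • g ξ).re ≤ ‖𝐞 ⟪ξ, w⟫ • g ξ‖ := Complex.re_le_norm _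
    have h2 : ‖𝐞 ⟪ξ, w⟫ • g ξ‖ = r ξ := by
      rw [hg_eq ξ]
      simp [Circle.smul_def, map_mul, Circle.norm_coe, _root_.abs_of_nonneg (hr_nonneg ξ)]
    linarith
  have hre_int : ∀ w : V, (𝓕⁻ g w).re = ∫ ξ, (𝐞 ⟪ξ, w⟫ • g ξ).re := by
    intro w
    have hri := integral_re (hint_z w)
    simp only [RCLike.re_to_complex] at hri
    rw [Real.fourierInv_eq, ← hri]
  have hf0 : f 0 = ∫ ξ, r ξ := by
    have h1 : (F 0).re = f 0 := by simp [F]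
    rw [← h1, ← hinv 0, hre_int 0]
    apply integral_congr_ae
    apply Eventually.of_forall
    intro ξ
    simp [hg_eq ξ]
  have hfz : f z = (𝓕⁻ g z).re := by
    rw [hinv z]; simp [F]
  rw [hfz, hf0, hre_int z]
  apply integral_mono ((hint_z z).re.congr ?_) hint_r (fun ξ => hpt z ξ)
  exact Eventually.of_forall fun ξ => by simp

lemma fourier_autocorr {g : V → ℝ} (hg : Continuous g) (hsupp : HasCompactSupport g) (ξ : V) :
    𝓕 (fun x => ((∫ t, g t * g (t - x) : ℝ) : ℂ)) ξ
      = 𝓕 (fun t => (g t : ℂ)) ξ * (starRingEnd ℂ) (𝓕 (fun t => (g t : ℂ)) ξ) := by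
  haveI : ProperSpace V := FiniteDimensional.proper ℝ V
  set G : V → ℂ := fun t => (g t : ℂ) with hG
  have hGc : Continuous G := Complex.continuous_ofReal.comp hg
  have hGsupp : HasCompactSupport G := hsupp.comp_left (g := fun r : ℝ => (r : ℂ)) (by simp)
  have hGint : Integrable G := hGc.integrable_of_hasCompactSupport hGsupp
  obtain ⟨R, hR0, hR⟩ : ∃ R, 0 < R ∧ tsupport g ⊆ closedBall 0 R := by
    obtain ⟨R, hR⟩ := hsupp.isBounded.subset_closedBall 0
    exact ⟨max R 1, by positivity, hR.trans (closedBall_subset_closedBall (le_max_left _ _))⟩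
  have hGz : ∀ t, t ∉ tsupport g → G t = 0 := by
    intro t ht
    simp [hG, image_eq_zero_of_notMem_tsupport ht]
  set c : V → ℂ := fun x => cexp (↑(-2 * π * ⟪x, ξ⟫) * Complex.I) with hc
  have hcc : Continuous c := by
    apply Complex.continuous_exp.comp
    exact (Complex.continuous_ofReal.comp
      ((continuous_const.mul (continuous_id.inner continuous_const)))).mul continuous_const
  set Φ : V → V → ℂ := fun x t => c x * (G t * G (t - x)) with hΦ
  have hΦc : Continuous (uncurry Φ) := by
    apply ((hcc.comp continuous_fst)).mul
    exact ((hGc.comp continuous_snd).mul (hGc.comp (continuous_snd.sub continuous_fst)))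
  have hΦsupp : HasCompactSupport (uncurry Φ) := by
    apply HasCompactSupport.intro (isCompact_closedBall (0 : V × V) (2 * R))
    rintro ⟨x, t⟩ hxt
    by_contra h
    have ht : t ∈ tsupport g := by
      by_contra ht
      exact h (by simp [uncurry, Φ, hGz t ht])
    have htx : t - x ∈ tsupport g := by
      by_contra htx
      exact h (by simp [uncurry, Φ, hGz _ htx])
    have h1 : ‖t‖ ≤ R := by simpa using hR ht
    have h2 : ‖t - x‖ ≤ R := by simpa using hR htx
    have h3 : ‖x‖ ≤ 2 * R := by
      have h4 : ‖x‖ ≤ ‖t‖ + ‖t - x‖ := by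
        simpa [sub_sub_cancel] using norm_sub_le t (t - x)
      linarith
    apply hxt
    simp only [mem_closedBall, dist_zero_right, Prod.norm_def]
    exact max_le h3 (h1.trans (by linarith))
  have hΦint : Integrable (uncurry Φ) := hΦc.integrable_of_hasCompactSupport hΦsupp
  have hA : ∀ x : V, ((∫ t, g t * g (t - x) : ℝ) : ℂ) = ∫ t, G t * G (t - x) := by
    intro x
    have e : (fun t => G t * G (t - x)) = fun t => ((g t * g (t - x) : ℝ) : ℂ) := by
      funext t; push_cast; rfl
    rw [e]
    exact (integral_ofReal (𝕜 := ℂ)).symm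
  rw [Real.fourier_eq']
  have step1 : ∫ x, cexp (↑(-2 * π * ⟪x, ξ⟫) * Complex.I) • ((∫ t, g t * g (t - x) : ℝ) : ℂ)
      = ∫ x, ∫ t, Φ x t := by
    congr 1 with x
    rw [smul_eq_mul, hA x, ← integral_const_mul]
  rw [step1, integral_integral_swap hΦint]
  set W : ℂ := ∫ s, cexp (↑(2 * π * ⟪s, ξ⟫) * Complex.I) * G s with hW
  have inner_eq : ∀ t : V, ∫ x, Φ x t = (c t * G t) * W := by
    intro t
    have e1 : ∀ x, Φ x t = G t * (c x * G (t - x)) := by intro x; simp only [Φ]; ring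
    simp only [e1]
    rw [integral_const_mul]
    have e2 : (fun x => c x * G (t - x)) =
        fun x => (fun s => cexp (↑(-2 * π * ⟪t - s, ξ⟫) * Complex.I) * G s) (t - x) := by
      funext x
      simp only [sub_sub_cancel, hc]
    rw [e2, integral_sub_left_eq_self (fun s => cexp (↑(-2 * π * ⟪t - s, ξ⟫) * Complex.I) * G s)
      volume t]
    have e3 : ∀ s : V, cexp (↑(-2 * π * ⟪t - s, ξ⟫) * Complex.I) * G s
        = c t * (cexp (↑(2 * π * ⟪s, ξ⟫) * Complex.I) * G s) := by
      intro s
      simp only [hc]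
      rw [← mul_assoc, ← Complex.exp_add]
      congr 2
      rw [inner_sub_left]
      push_cast
      ring
    simp only [e3]
    rw [integral_const_mul]
    ring
  simp only [inner_eq]
  rw [integral_mul_const]
  have outW : (starRingEnd ℂ) (𝓕 G ξ) = W := by
    rw [Real.fourier_eq', ← integral_conj]
    congr 1 with s
    rw [smul_eq_mul, map_mul, ← Complex.exp_conj]
    simp only [map_mul, Complex.conj_ofReal, Complex.conj_I, hG]
    push_cast
    ring_nf
  rw [← outW]
  congr 1
  rw [Real.fourier_eq']
  simp only [smul_eq_mul, hc]

lemma cross_zero {φ : V → ℝ} {δ : ℝ} (hsupp : Function.support φ ⊆ ball (0:V) δ) {a b : V}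
    (h : 2 * δ ≤ ‖a - b‖) : ∫ t, φ (t - a) * φ (t - b) = 0 := by
  have hz : ∀ t, φ (t - a) * φ (t - b) = 0 := by
    intro t
    by_contra hne
    have h1 : t - a ∈ Function.support φ := by
      simp only [Function.mem_support]
      intro h0; exact hne (by rw [h0, zero_mul])
    have h2 : t - b ∈ Function.support φ := by
      simp only [Function.mem_support]
      intro h0; exact hne (by rw [h0, mul_zero])
    have n1 : ‖t - a‖ < δ := by simpa [dist_zero_right] using hsupp h1
    have n2 : ‖t - b‖ < δ := by simpa [dist_zero_right] using hsupp h2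
    have : ‖a - b‖ ≤ ‖t - a‖ + ‖t - b‖ := by
      have : a - b = (t - b) - (t - a) := by abel
      rw [this]
      exact (norm_sub_le _ _).trans (by rw [add_comm])
    linarith
  simp [hz]

lemma habs_int : ∀ (a b : ℤ), a ≠ b → (1:ℝ) ≤ |(a:ℝ) - (b:ℝ)| := by
  intro a b hab
  have h1 : (1:ℤ) ≤ |a - b| := Int.one_le_abs (sub_ne_zero.2 hab)
  have h2 : ((|a - b| : ℤ) : ℝ) = |(a:ℝ) - (b:ℝ)| := by push_cast; ring_nf
  calc (1:ℝ) ≤ ((|a - b| : ℤ) : ℝ) := by exact_mod_cast h1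
    _ = _ := h2

set_option maxHeartbeats 2000000 in
lemma construct (z : V) (N : ℕ) (hN : 0 < N) (δ : ℝ) (hδ : 0 < δ) :
    ∃ f : V → ℝ, Continuous f ∧ Integrable (fun x => (f x : ℂ)) ∧
      (∀ ξ, 0 ≤ (𝓕 (fun x => (f x : ℂ)) ξ).re ∧ (𝓕 (fun x => (f x : ℂ)) ξ).im = 0) ∧
      (tsupport f ⊆ ⋃ m ∈ Finset.Icc (-(N : ℤ) + 1) ((N : ℤ) - 1),
        closedBall ((m : ℝ) • z) (2 * δ)) ∧
      f 0 = 1 ∧ (4 * δ ≤ ‖z‖ → f z = ((N : ℝ) - 1) / N) := by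
  haveI : ProperSpace V := FiniteDimensional.proper ℝ V
  -- the bump
  set φ : V → ℝ := fun x => max (δ - ‖x‖) 0 with hφ
  have hφc : Continuous φ := (continuous_const.sub continuous_norm).max continuous_const
  have hφnn : ∀ x, 0 ≤ φ x := fun x => le_max_right _ _
  have hφzero : ∀ x : V, δ ≤ ‖x‖ → φ x = 0 := by
    intro x hx
    simp only [hφ]
    exact max_eq_right (by linarith)
  have hφpos : ∀ x : V, ‖x‖ < δ → 0 < φ x := by
    intro x hx
    simp only [hφ]
    exact lt_max_of_lt_left (by linarith)
  have hφsupp : Function.support φ ⊆ ball (0 : V) δ := by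
    intro x hx
    rcases lt_or_ge ‖x‖ δ with h | h
    · simpa [dist_zero_right] using h
    · exact absurd (hφzero x h) hx
  have hφcompact : HasCompactSupport φ := by
    apply HasCompactSupport.intro (isCompact_closedBall (0:V) δ)
    intro x hx
    simp only [mem_closedBall, dist_zero_right, not_le] at hx
    exact hφzero x hx.le
  have hcs_tr : ∀ a : V, HasCompactSupport fun t => φ (t - a) := by
    intro a
    apply HasCompactSupport.intro (isCompact_closedBall a δ)
    intro x hx
    simp only [mem_closedBall, dist_eq_norm, not_le] at hx
    exact hφzero _ hx.le
  have hterm_int : ∀ (a b : V), Integrable (fun t => φ (t - a) * φ (t - b)) := by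
    intro a b
    exact ((hφc.comp (continuous_id.sub continuous_const)).mul
      (hφc.comp (continuous_id.sub continuous_const))).integrable_of_hasCompactSupport
      ((hcs_tr a).mul_right)
  have hdiag : ∀ a : V, ∫ t, φ (t - a) * φ (t - a) = ∫ t, φ t * φ t := by
    intro a
    exact integral_sub_right_eq_self (fun t => φ t * φ t) a
  set c0 : ℝ := ∫ t, φ t * φ t with hc0
  have hφφint : Integrable (fun t => φ t * φ t) := by
    simpa using hterm_int 0 0
  have hc0pos : 0 < c0 := by
    rw [hc0, integral_pos_iff_support_of_nonneg (fun t => mul_self_nonneg (φ t)) hφφint]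
    apply lt_of_lt_of_le (measure_ball_pos volume (0:V) hδ)
    apply measure_mono
    intro x hx
    have := hφpos x (by simpa [dist_zero_right] using hx)
    simp only [Function.mem_support]
    positivity
  -- the sum of translated bumps
  set g : V → ℝ := fun t => ∑ k ∈ Finset.range N, φ (t - (k : ℝ) • z) with hg
  have hgc : Continuous g :=
    continuous_finset_sum _ (fun k _ => hφc.comp (continuous_id.sub continuous_const))
  have hgnn : ∀ t, 0 ≤ g t := fun t => Finset.sum_nonneg fun k _ => hφnn _
  set Rg : ℝ := δ + N * ‖z‖ with hRg
  have hgz : ∀ t : V, Rg < ‖t‖ → g t = 0 := by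
    intro t ht
    rw [hg]
    apply Finset.sum_eq_zero
    intro k hk
    apply hφzero
    by_contra hcon
    push_neg at hcon
    have h1 : ‖t‖ ≤ ‖t - (k:ℝ)•z‖ + ‖(k:ℝ)•z‖ := by
      simpa using norm_add_le (t - (k:ℝ)•z) ((k:ℝ)•z)
    have h2 : ‖(k:ℝ)•z‖ ≤ (N:ℝ) * ‖z‖ := by
      rw [norm_smul, Real.norm_eq_abs, _root_.abs_of_nonneg (Nat.cast_nonneg k)]
      have : (k:ℝ) ≤ N := by
        exact_mod_cast (Finset.mem_range.1 hk).le
      exact mul_le_mul_of_nonneg_right this (norm_nonneg z)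
    rw [hRg] at ht
    linarith
  have hgsupp : HasCompactSupport g := by
    apply HasCompactSupport.intro (isCompact_closedBall (0:V) Rg)
    intro x hx
    simp only [mem_closedBall, dist_zero_right, not_le] at hx
    exact hgz x hx
  have hgint : Integrable g := hgc.integrable_of_hasCompactSupport hgsupp
  -- the autocorrelation
  set A : V → ℝ := fun x => ∫ t, g t * g (t - x) with hA
  have hA_eq : ∀ x, A x = ∑ j ∈ Finset.range N, ∑ k ∈ Finset.range N,
      ∫ t, φ (t - (j:ℝ)•z) * φ (t - (x + (k:ℝ)•z)) := by
    intro x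
    rw [hA]
    have e1 : ∀ t, g t * g (t - x) = ∑ j ∈ Finset.range N, ∑ k ∈ Finset.range N,
        φ (t - (j:ℝ)•z) * φ (t - (x + (k:ℝ)•z)) := by
      intro t
      rw [hg, Finset.sum_mul_sum]
      apply Finset.sum_congr rfl
      intro j _
      apply Finset.sum_congr rfl
      intro k _
      rw [sub_sub]
    simp only [e1]
    rw [integral_finset_sum _ (fun j _ => integrable_finset_sum _ (fun k _ => hterm_int _ _))]
    apply Finset.sum_congr rfl
    intro j _
    rw [integral_finset_sum _ (fun k _ => hterm_int _ _)]
  have hnormsep : ∀ (a b : ℤ), a ≠ b → ‖z‖ ≤ ‖(a:ℝ)•z - (b:ℝ)•z‖ := by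
    intro a b hab
    rw [← sub_smul, norm_smul, Real.norm_eq_abs]
    nth_rewrite 1 [← one_mul ‖z‖]
    exact mul_le_mul_of_nonneg_right (by exact_mod_cast habs_int a b hab) (norm_nonneg z)
  -- A 0 under separation
  have hA0sep : 4 * δ ≤ ‖z‖ → A 0 = (N : ℝ) * c0 := by
    intro hsep
    rw [hA_eq 0]
    have e2 : ∀ j ∈ Finset.range N, ∑ k ∈ Finset.range N,
        (∫ t, φ (t - (j:ℝ)•z) * φ (t - ((0:V) + (k:ℝ)•z))) = c0 := by
      intro j hj
      have e3 : ∀ k ∈ Finset.range N,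
          (∫ t, φ (t - (j:ℝ)•z) * φ (t - ((0:V) + (k:ℝ)•z))) =
          if k = j then c0 else 0 := by
        intro k _
        by_cases hjk : k = j
        · subst hjk
          simp only [zero_add, if_pos rfl]
          exact hdiag _
        · rw [if_neg hjk]
          apply cross_zero hφsupp
          rw [zero_add]
          have := hnormsep j k (fun h => hjk (by exact_mod_cast h.symm))
          push_cast at this ⊢
          linarith
      rw [Finset.sum_congr rfl e3, Finset.sum_ite_eq' (Finset.range N) j (fun _ => c0),
        if_pos hj]
    rw [Finset.sum_congr rfl e2, Finset.sum_const, Finset.card_range, nsmul_eq_mul]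
  -- A z under separation
  have hAzsep : 4 * δ ≤ ‖z‖ → A z = ((N : ℝ) - 1) * c0 := by
    intro hsep
    rw [hA_eq z, Finset.sum_comm]
    have e2 : ∀ k ∈ Finset.range N, ∑ j ∈ Finset.range N,
        (∫ t, φ (t - (j:ℝ)•z) * φ (t - (z + (k:ℝ)•z))) =
        if k + 1 ∈ Finset.range N then c0 else 0 := by
      intro k _
      have e3 : ∀ j ∈ Finset.range N,
          (∫ t, φ (t - (j:ℝ)•z) * φ (t - (z + (k:ℝ)•z))) =
          if j = k + 1 then c0 else 0 := by
        intro j _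
        have hzk : z + (k:ℝ)•z = ((k:ℝ)+1)•z := by
          rw [add_smul, one_smul, add_comm]
        by_cases hjk : j = k + 1
        · subst hjk
          rw [if_pos rfl, hzk]
          have : ((k:ℝ) + 1) = ((k+1 : ℕ) : ℝ) := by push_cast; ring
          rw [this]
          exact hdiag _
        · rw [if_neg hjk, hzk]
          apply cross_zero hφsupp
          have hne : (j : ℤ) ≠ (k : ℤ) + 1 := by
            intro h
            exact hjk (by exact_mod_cast h)
          have := hnormsep j ((k:ℤ)+1) hne
          push_cast at this ⊢
          linarith
      rw [Finset.sum_congr rfl e3, Finset.sum_ite_eq' (Finset.range N) (k+1) (fun _ => c0)]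
    rw [Finset.sum_congr rfl e2]
    have e4 : ∀ k ∈ Finset.range N, (if k + 1 ∈ Finset.range N then c0 else 0) =
        if k ∈ Finset.range (N - 1) then c0 else 0 := by
      intro k _
      congr 1
      apply propext
      simp only [Finset.mem_range]
      omega
    rw [Finset.sum_congr rfl e4, ← Finset.sum_filter]
    have e5 : (Finset.range N).filter (fun k => k ∈ Finset.range (N-1)) =
        Finset.range (N-1) := by
      ext k
      simp only [Finset.mem_filter, Finset.mem_range]
      omega
    rw [e5, Finset.sum_const, Finset.card_range, nsmul_eq_mul]
    congr 1
    have : (1:ℕ) ≤ N := hN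
    push_cast [Nat.cast_sub this]
    ring
  -- positivity of A 0
  have hggint : ∀ x : V, Integrable (fun t => g t * g (t - x)) := by
    intro x
    exact (hgc.mul (hgc.comp (continuous_id.sub continuous_const))).integrable_of_hasCompactSupport
      hgsupp.mul_right
  have hA0pos : 0 < A 0 := by
    have e : A 0 = ∫ t, g t * g t := by rw [hA]; simp
    rw [e, integral_pos_iff_support_of_nonneg (fun t => mul_self_nonneg (g t))
      (by simpa using hggint 0)]
    apply lt_of_lt_of_le (measure_ball_pos volume (0:V) hδ)
    apply measure_mono
    intro x hx
    have h1 : 0 < φ x := hφpos x (by simpa [dist_zero_right] using hx)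
    have h2 : 0 < g x := by
      have h3 : φ (x - ((0:ℕ):ℝ)•z) ≤ g x :=
        Finset.single_le_sum (f := fun k : ℕ => φ (x - (k:ℝ)•z)) (fun k _ => hφnn _)
          (Finset.mem_range.2 hN)
      have h4 : φ (x - ((0:ℕ):ℝ)•z) = φ x := by norm_num
      linarith
    simp only [Function.mem_support]
    positivity
  -- continuity of A
  have hAc : Continuous A := by
    have e : A = MeasureTheory.convolution g (fun s => g (-s)) (ContinuousLinearMap.mul ℝ ℝ)
        volume := by
      funext x
      rw [hA, MeasureTheory.convolution_def]
      apply integral_congr_ae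
      filter_upwards with t
      simp [neg_sub]
    rw [e]
    exact HasCompactSupport.continuous_convolution_right (ContinuousLinearMap.mul ℝ ℝ)
      (hgsupp.comp_homeomorph (Homeomorph.neg V)) hgc.locallyIntegrable
      (hgc.comp continuous_neg)
  -- support of A
  have hAzero : ∀ x : V, A x ≠ 0 → ∃ t, g t ≠ 0 ∧ g (t - x) ≠ 0 := by
    intro x hx
    by_contra hcon
    push_neg at hcon
    apply hx
    rw [hA]
    have e : ∀ t, g t * g (t - x) = 0 := by
      intro t
      rcases eq_or_ne (g t) 0 with h | h
      · rw [h, zero_mul]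
      · rw [hcon t h, mul_zero]
    simp [e]
  have hgsupp_ball : ∀ t : V, g t ≠ 0 → ∃ k : ℕ, k < N ∧ ‖t - (k:ℝ)•z‖ < δ := by
    intro t ht
    rw [hg] at ht
    obtain ⟨k, hk, hne⟩ := Finset.exists_ne_zero_of_sum_ne_zero ht
    exact ⟨k, Finset.mem_range.1 hk,
      by simpa [dist_zero_right] using hφsupp (Function.mem_support.2 hne)⟩
  -- the normalized function
  set f : V → ℝ := fun x => A x / A 0 with hfdef
  have hsub : Function.support f ⊆ ⋃ m ∈ Finset.Icc (-(N : ℤ) + 1) ((N : ℤ) - 1),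
      closedBall ((m : ℝ) • z) (2 * δ) := by
    intro x hx
    have hAx : A x ≠ 0 := by
      intro h
      apply hx
      simp [hfdef, h]
    obtain ⟨t, ht1, ht2⟩ := hAzero x hAx
    obtain ⟨j, hj, hjb⟩ := hgsupp_ball t ht1
    obtain ⟨k, hk, hkb⟩ := hgsupp_ball (t - x) ht2
    have hmem : ((j:ℤ) - k) ∈ Finset.Icc (-(N : ℤ) + 1) ((N : ℤ) - 1) := by
      simp only [Finset.mem_Icc]
      omega
    apply Set.mem_biUnion hmem
    simp only [mem_closedBall, dist_eq_norm]
    have e : x - (((j:ℝ) - (k:ℝ))•z) = (t - (j:ℝ)•z) - ((t - x) - (k:ℝ)•z) := by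
      rw [sub_smul]; abel
    have hnorm : ‖x - (((j:ℝ) - (k:ℝ))•z)‖ ≤ ‖t - (j:ℝ)•z‖ + ‖(t - x) - (k:ℝ)•z‖ := by
      rw [e]; exact norm_sub_le _ _
    have ecast : ((((j:ℤ) - (k:ℤ)) : ℤ) : ℝ) = (j:ℝ) - (k:ℝ) := by push_cast; ring
    rw [ecast]
    linarith
  have hclosedU : IsClosed (⋃ m ∈ Finset.Icc (-(N : ℤ) + 1) ((N : ℤ) - 1),
      closedBall ((m : ℝ) • z) (2 * δ)) := by
    apply Set.Finite.isClosed_biUnion ((Finset.Icc _ _).finite_toSet)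
    intro m _
    exact isClosed_closedBall
  have hsuppf : tsupport f ⊆ ⋃ m ∈ Finset.Icc (-(N : ℤ) + 1) ((N : ℤ) - 1),
      closedBall ((m : ℝ) • z) (2 * δ) := closure_minimal hsub hclosedU
  have hfcs : HasCompactSupport f := by
    apply IsCompact.of_isClosed_subset ?_ (isClosed_tsupport f) hsuppf
    apply Set.Finite.isCompact_biUnion ((Finset.Icc _ _).finite_toSet)
    intro m _
    exact isCompact_closedBall _ _
  have hfc : Continuous f := hAc.div_const _
  have hfint : Integrable (fun x => (f x : ℂ)) :=
    (Complex.continuous_ofReal.comp hfc).integrable_of_hasCompactSupport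
      (hfcs.comp_left (g := fun r : ℝ => (r : ℂ)) (by simp))
  have hfourier : ∀ ξ, 𝓕 (fun x => (f x : ℂ)) ξ =
      (((A 0)⁻¹ : ℝ) : ℂ) * 𝓕 (fun x => (A x : ℂ)) ξ := by
    intro ξ
    rw [Real.fourier_eq', Real.fourier_eq', ← integral_const_mul]
    congr 1 with x
    simp only [smul_eq_mul, hfdef]
    push_cast
    ring
  have hposdef : ∀ ξ, 0 ≤ (𝓕 (fun x => (f x : ℂ)) ξ).re ∧
      (𝓕 (fun x => (f x : ℂ)) ξ).im = 0 := by
    intro ξ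
    have hauto := fourier_autocorr hgc hgsupp ξ
    have e : 𝓕 (fun x => (A x : ℂ)) ξ =
        ((Complex.normSq (𝓕 (fun t => (g t : ℂ)) ξ) : ℝ) : ℂ) := by
      rw [show (fun x => (A x : ℂ)) = fun x => ((∫ t, g t * g (t - x) : ℝ) : ℂ) from rfl]
      rw [hauto, Complex.mul_conj]
    rw [hfourier ξ, e, ← Complex.ofReal_mul]
    constructor
    · rw [Complex.ofReal_re]
      exact mul_nonneg (inv_nonneg.2 hA0pos.le) (Complex.normSq_nonneg _)
    · rw [Complex.ofReal_im]
  have hf0 : f 0 = 1 := by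
    simp only [hfdef]
    exact div_self (ne_of_gt hA0pos)
  have hfz : 4 * δ ≤ ‖z‖ → f z = ((N : ℝ) - 1) / N := by
    intro hsep
    simp only [hfdef]
    rw [hAzsep hsep, hA0sep hsep, mul_div_mul_right _ _ (ne_of_gt hc0pos)]
  exact ⟨f, hfc, hfint, hposdef, hsuppf, hf0, hfz⟩

/-- If the open set `Ω ⊆ ℝ^d` contains every integer multiple of `z`, then the
supremum of `f(z)` over continuous integrable positive definite `f` with
`supp f ⊆ Ω` and `f 0 = 1` equals `1`. -/
theorem boas_kac_all_multiples
    (d : ℕ) (Ω : Set (EuclideanSpace ℝ (Fin d))) (hΩ_open : IsOpen Ω)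
    (z : EuclideanSpace ℝ (Fin d)) (hz : ∀ k : ℤ, (k : ℝ) • z ∈ Ω) :
    sSup {y : ℝ | ∃ f : EuclideanSpace ℝ (Fin d) → ℝ,
        Continuous f ∧ Integrable (fun x => (f x : ℂ)) ∧
        (∀ ξ, 0 ≤ (FourierTransform.fourier (fun x => (f x : ℂ)) ξ).re ∧
          (FourierTransform.fourier (fun x => (f x : ℂ)) ξ).im = 0) ∧
        tsupport f ⊆ Ω ∧ f 0 = 1 ∧ f z = y}
      = 1 := by
  set S := {y : ℝ | ∃ f : EuclideanSpace ℝ (Fin d) → ℝ,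
        Continuous f ∧ Integrable (fun x => (f x : ℂ)) ∧
        (∀ ξ, 0 ≤ (FourierTransform.fourier (fun x => (f x : ℂ)) ξ).re ∧
          (FourierTransform.fourier (fun x => (f x : ℂ)) ξ).im = 0) ∧
        tsupport f ⊆ Ω ∧ f 0 = 1 ∧ f z = y} with hS
  have hub : ∀ y ∈ S, y ≤ 1 := by
    rintro y ⟨f, hc, hi, hp, hsupp, h0, hzv⟩
    calc y = f z := hzv.symm
      _ ≤ f 0 := partA hc hi hp z
      _ = 1 := h0
  have hδ_exists : ∀ N : ℕ, 0 < N → ∃ δ : ℝ, 0 < δ ∧ (z ≠ 0 → 4 * δ ≤ ‖z‖) ∧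
      (⋃ m ∈ Finset.Icc (-(N : ℤ) + 1) ((N : ℤ) - 1),
        closedBall ((m : ℝ) • z) (2 * δ)) ⊆ Ω := by
    intro N hN
    have hball : ∀ m : ℤ, ∃ ε : ℝ, 0 < ε ∧ closedBall ((m : ℝ) • z) ε ⊆ Ω := by
      intro m
      obtain ⟨ε, hε, hsub⟩ := Metric.isOpen_iff.1 hΩ_open _ (hz m)
      exact ⟨ε / 2, by linarith, (closedBall_subset_ball (by linarith)).trans hsub⟩
    choose ε hεpos hεsub using hball
    set T := Finset.Icc (-(N : ℤ) + 1) ((N : ℤ) - 1) with hT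
    have hTne : T.Nonempty := ⟨0, by
      simp only [hT, Finset.mem_Icc]
      omega⟩
    set ε0 : ℝ := T.inf' hTne ε with hε0
    have hε0pos : 0 < ε0 := (Finset.lt_inf'_iff hTne).2 fun m _ => hεpos m
    by_cases hz0 : z = 0
    · refine ⟨ε0 / 2, by linarith, fun h => absurd hz0 h, ?_⟩
      intro x hx
      obtain ⟨m, hm, hxm⟩ := Set.mem_iUnion₂.1 hx
      apply hεsub m
      apply closedBall_subset_closedBall ?_ hxm
      calc 2 * (ε0 / 2) = ε0 := by ring
        _ ≤ ε m := Finset.inf'_le ε hm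
    · have hnz : 0 < ‖z‖ := norm_pos_iff.2 hz0
      refine ⟨min (ε0 / 2) (‖z‖ / 8), by positivity, fun _ => ?_, ?_⟩
      · have : min (ε0 / 2) (‖z‖ / 8) ≤ ‖z‖ / 8 := min_le_right _ _
        linarith
      · intro x hx
        obtain ⟨m, hm, hxm⟩ := Set.mem_iUnion₂.1 hx
        apply hεsub m
        apply closedBall_subset_closedBall ?_ hxm
        have h1 : min (ε0 / 2) (‖z‖ / 8) ≤ ε0 / 2 := min_le_left _ _
        calc 2 * min (ε0 / 2) (‖z‖ / 8) ≤ 2 * (ε0 / 2) := by linarith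
          _ = ε0 := by ring
          _ ≤ ε m := Finset.inf'_le ε hm
  by_cases hz0 : z = 0
  · obtain ⟨δ, hδpos, _, hsub⟩ := hδ_exists 1 one_pos
    obtain ⟨f, hfc, hfi, hfp, hfs, hf0, _⟩ := construct z 1 one_pos δ hδpos
    have h1S : (1 : ℝ) ∈ S := ⟨f, hfc, hfi, hfp, hfs.trans hsub, hf0, by rw [hz0]; exact hf0⟩
    exact le_antisymm (csSup_le ⟨1, h1S⟩ hub) (le_csSup ⟨1, hub⟩ h1S)
  · have hmem : ∀ n : ℕ, (1 - ((n : ℝ) + 1)⁻¹) ∈ S := by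
      intro n
      obtain ⟨δ, hδpos, hδz, hsub⟩ := hδ_exists (n + 1) n.succ_pos
      obtain ⟨f, hfc, hfi, hfp, hfs, hf0, hfz⟩ := construct z (n + 1) n.succ_pos δ hδpos
      refine ⟨f, hfc, hfi, hfp, hfs.trans hsub, hf0, ?_⟩
      rw [hfz (hδz hz0)]
      have hne : ((n : ℝ) + 1) ≠ 0 := by positivity
      push_cast
      field_simp
    have hbdd : BddAbove S := ⟨1, hub⟩
    have hle : sSup S ≤ 1 := csSup_le ⟨_, hmem 0⟩ hub
    have hge : (1 : ℝ) ≤ sSup S := by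
      have htend : Tendsto (fun n : ℕ => 1 - ((n : ℝ) + 1)⁻¹) atTop (𝓝 1) := by
        have := tendsto_const_nhds (x := (1:ℝ)) (f := atTop (α := ℕ)) |>.sub
          (tendsto_inv_atTop_zero.comp
            (tendsto_atTop_add_const_right atTop (1 : ℝ) tendsto_natCast_atTop_atTop))
        simpa using this
      apply le_of_tendsto htend
      filter_upwards with n
      exact le_csSup hbdd (hmem n)
    linarith
end
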